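/- Let R be a commutative ring and σ a finite type. In the formal power series ring PowerSeries (MvPolynomial σ R) one has (∏_{i ∈ σ} (1 - X_i · t)) · (∑_{n=0}^{∞} h_n · t^n) = 1, where t is the power series variable, X_i is the variable of MvPolynomial σ R indexed by i (viewed as a constant coefficient), and h_n is the complete homogeneous symmetric polynomial of degree n. (This is pExp[∑ x_i] = ∏_i 1/(1 - x_i) for an alphabet of monomial elements.) -/

import Mathlib

open MvPolynomial

private lemma geom_inv {A : Type*} [CommRing A] (r : A) :
    (1 - PowerSeries.C (R := A) r * PowerSeries.X) * PowerSeries.mk (fun n => r ^ n) = 1 := by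
  ext n
  rw [sub_mul, one_mul, map_sub, mul_assoc]
  cases n with
  | zero => simp
  | succ n =>
    simp [PowerSeries.coeff_succ_X_mul, pow_succ, mul_comm]

private lemma mk_hsymm_eq_prod (R : Type*) [CommRing R] (σ : Type*) [Fintype σ]
    [DecidableEq σ] :
    PowerSeries.mk (fun n => hsymm σ R n) =
      ∏ i : σ, PowerSeries.mk (fun n => (X i : MvPolynomial σ R) ^ n) := by
  refine PowerSeries.ext fun d => ?_
  rw [PowerSeries.coeff_prod, PowerSeries.coeff_mk]
  simp only [PowerSeries.coeff_mk]
  rw [hsymm]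
  refine Finset.sum_bij (fun s _ => Multiset.toFinsupp (s : Multiset σ)) ?_ ?_ ?_ ?_
  · intro s _
    rw [Finset.mem_finsuppAntidiag]
    refine ⟨?_, fun x _ => Finset.mem_univ x⟩
    have : ∀ i : σ, Multiset.toFinsupp (s : Multiset σ) i = (s : Multiset σ).count i :=
      fun i => Multiset.toFinsupp_apply _ _
    calc ∑ i : σ, Multiset.toFinsupp (s : Multiset σ) i
        = ∑ i : σ, (s : Multiset σ).count i := Finset.sum_congr rfl fun i _ => this i
      _ = Multiset.card (s : Multiset σ) := by
          rw [← Multiset.toFinset_sum_count_eq]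
          exact (Finset.sum_subset (Finset.subset_univ _) fun x _ hx =>
            Multiset.count_eq_zero_of_notMem (by simpa using hx)).symm
      _ = d := s.2
  · intro s₁ h₁ s₂ h₂ h
    exact Subtype.ext (Multiset.toFinsupp.injective h)
  · intro l hl
    rw [Finset.mem_finsuppAntidiag] at hl
    refine ⟨⟨Finsupp.toMultiset l, ?_⟩, Finset.mem_univ _, Finsupp.toMultiset_toFinsupp l⟩
    rw [Finsupp.card_toMultiset, ← hl.1]
    rw [Finsupp.sum_fintype]
    · rfl
    · intro; rfl
  · intro s _
    refine (Finset.prod_multiset_map_count _ _).trans ?_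
    refine (Finset.prod_subset (Finset.subset_univ _) ?_).trans ?_
    · intro x _ hx
      rw [Multiset.mem_toFinset] at hx
      rw [Multiset.count_eq_zero_of_notMem hx, pow_zero]
    · exact Finset.prod_congr rfl fun i _ => rfl

theorem prod_one_sub_X_mul_hsymm_series (R : Type*) [CommRing R] (σ : Type*) [Fintype σ]
    [DecidableEq σ] :
    (∏ i : σ, (1 - PowerSeries.C (R := MvPolynomial σ R) (X i) * PowerSeries.X)) *
        PowerSeries.mk (fun n => hsymm σ R n) = 1 := by
  rw [mk_hsymm_eq_prod, ← Finset.prod_mul_distrib]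
  exact Finset.prod_eq_one fun i _ => geom_inv (X i)
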